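/- Starting from any configuration satisfying the state invariant, if there is no food particle in the system thereafter, then under the Adaptive α-Compression Algorithm all particles switch to the dispersion state within an expected number of steps polynomial in the number of particles and lattice size. -/

import Mathlib

open scoped Classical ENNReal

noncomputable section

/-! ## The Adaptive α-Compression Algorithm of the paper, formalized.

Particles occupy distinct vertices of a `L × L` triangular-lattice torus (`N = L²` vertices).
Each occupied vertex carries one of six states: dispersion `D`, dispersion-token `DT`, or a
compression state `C g f` where `g` is the growth-token bit and `f` the food-adjacency bit
(`C false false = C`, `C true false = C_G`, `C false true = C_F`, `C true true = C_{GF}`).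
A single immobile food particle may occupy one (otherwise empty) vertex.

At each discrete step one occupied vertex is chosen uniformly at random and activated: it
performs the state-change step followed by the movement step of the algorithm, exactly as
described in the paper (with a fixed constant `p < 1/6` and bias parameter `λ > 1`).
The one-step transition is formalized as a `PMF` on configurations. -/

/-- Vertices of the `L × L` triangular-lattice torus. -/
abbrev V (L : ℕ) := ZMod L × ZMod L

/-- The six lattice directions. -/
def dirList (L : ℕ) : List (V L) :=
  [(1, 0), (-1, 0), (0, 1), (0, -1), (1, 1), (-1, -1)]

def dirFinset (L : ℕ) : Finset (V L) := (dirList L).toFinset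

lemma dirFinset_nonempty (L : ℕ) : (dirFinset L).Nonempty :=
  ⟨(1, 0), by simp [dirFinset, dirList]⟩

/-- A `PMF` which assigns probability `p` to `true` and `1 - p` to `false`
(the older Mathlib `PMF.bernoulli`, with `p : ℝ≥0∞`). -/
def bernoulliENN (p : ℝ≥0∞) (h : p ≤ 1) : PMF Bool :=
  PMF.ofFintype (fun b => cond b p (1 - p)) (by simp [h])

/-- The neighbours of a vertex. -/
def nbrs {L : ℕ} (v : V L) : Finset (V L) := (dirFinset L).image (fun d => v + d)

/-- Particle states: dispersion `D`, dispersion token `DT`, and the four compression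
states `C (growth bit) (food bit)`. -/
inductive CState : Type
  | D : CState
  | DT : CState
  | C : Bool → Bool → CState
deriving DecidableEq

/-- A configuration: each vertex is empty or holds a particle with its state; a food
particle may occupy one vertex. -/
structure Conf (L : ℕ) : Type where
  occ : V L → Option CState
  food : Option (V L)

variable {L : ℕ}

/-- `v` holds a particle in a compression state or the dispersion-token state. -/
def isTokenSite (c : Conf L) (v : V L) : Prop := ∃ s, c.occ v = some s ∧ s ≠ CState.D

/-- Cluster particles: compression-state particles, `DT`-state particles, and the food. -/
def isClusterSite (c : Conf L) (v : V L) : Prop := c.food = some v ∨ isTokenSite c v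

/-- `v` is adjacent to the food particle. -/
def adjFood (c : Conf L) (v : V L) : Prop := ∃ f, c.food = some f ∧ f ∈ nbrs v

/-- Connectivity within the subgraph induced on compression-state and `DT`-state
particles (the food particle belongs to no component). -/
def compReach (c : Conf L) : V L → V L → Prop :=
  Relation.ReflTransGen (fun a b => isTokenSite c a ∧ isTokenSite c b ∧ b ∈ nbrs a)

/-- The state invariant: every component (of compression-state and `DT`-state particles)
contains a particle in state `C_{GF}`, `C_F` or `DT`. -/
def StateInvariant (c : Conf L) : Prop :=
  ∀ v, isTokenSite c v → ∃ w, compReach c v w ∧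
    (c.occ w = some CState.DT ∨ ∃ g, c.occ w = some (CState.C g true))

def setSt (c : Conf L) (v : V L) (s : CState) : Conf L :=
  ⟨Function.update c.occ v (some s), c.food⟩

/-- Switch `v` to the dispersion state and all its compression-state neighbours to `DT`. -/
def spreadDT (c : Conf L) (v : V L) : Conf L :=
  ⟨fun w => if w = v then some CState.D
      else if w ∈ nbrs v ∧ ∃ g f, c.occ w = some (CState.C g f) then some CState.DT
      else c.occ w,
    c.food⟩

/-- Remove a growth token. -/
def clearG : Option CState → Option CState
  | some (CState.C _ f) => some (CState.C false f)
  | o => o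

def moveP (c : Conf L) (v w : V L) (s : CState) : Conf L :=
  ⟨Function.update (Function.update c.occ v none) w (some s), c.food⟩

/-- Step 1 (state change) of the algorithm, for the activated particle at `v`. -/
def stateChange (p : ℝ≥0∞) (hp : p ≤ 1) (c : Conf L) (v : V L) : PMF (Conf L) :=
  match c.occ v with
  | none => PMF.pure c
  | some CState.D =>
      if adjFood c v then
        (bernoulliENN p hp).bind fun b =>
          PMF.pure (if b then setSt c v (CState.C false true) else c)
      else if hG : ((nbrs v).filter fun w => ∃ f, c.occ w = some (CState.C true f)).Nonempty then
        (PMF.uniformOfFinset _ hG).bind fun w =>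
          (bernoulliENN p hp).bind fun b =>
            PMF.pure (if b then
                setSt ⟨Function.update c.occ w (clearG (c.occ w)), c.food⟩ v
                  (CState.C false false)
              else c)
      else PMF.pure c
  | some CState.DT => PMF.pure (spreadDT c v)
  | some (CState.C g f) =>
      if (f = true ∧ ¬ adjFood c v) ∨ (f = false ∧ adjFood c v) ∨
          (adjFood c v ∧ ∃ w fd, c.food = some fd ∧ w ∈ nbrs v ∧ w ∈ nbrs fd ∧
            ∃ g', c.occ w = some (CState.C g' false)) then
        PMF.pure (spreadDT c v)
      else if g then
        (PMF.uniformOfFinset (dirFinset L) (dirFinset_nonempty L)).bind fun d =>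
          PMF.pure
            (match c.occ (v + d) with
              | some (CState.C false f') =>
                  setSt (setSt c v (CState.C false f)) (v + d) (CState.C true f')
              | _ => c)
      else if adjFood c v then
        (bernoulliENN p hp).bind fun b =>
          PMF.pure (if b then setSt c v (CState.C true f) else c)
      else PMF.pure c

/-- `N(ℓ ∪ ℓ')`. -/
def NNset (v w : V L) : Set (V L) := ((nbrs v : Set (V L)) ∪ (nbrs w : Set (V L))) \ {v, w}

/-- Connectivity between cluster particles through a set `A`. -/
def connWithin (c : Conf L) (A : Set (V L)) : V L → V L → Prop :=
  Relation.ReflTransGen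
    (fun a b => a ∈ A ∧ b ∈ A ∧ isClusterSite c a ∧ isClusterSite c b ∧ b ∈ nbrs a)

/-- Property 1 of valid compression moves. -/
def MoveProp1 (c : Conf L) (v w : V L) : Prop :=
  (nbrs v ∩ nbrs w).Nonempty ∧
    ∀ x ∈ NNset v w, isClusterSite c x →
      ∃ y ∈ nbrs v ∩ nbrs w, isClusterSite c y ∧ connWithin c (NNset v w) x y

/-- Property 2 of valid compression moves. -/
def MoveProp2 (c : Conf L) (v w : V L) : Prop :=
  nbrs v ∩ nbrs w = ∅ ∧
  (∃ x ∈ nbrs v, isClusterSite c x) ∧ (∃ x ∈ nbrs w, isClusterSite c x) ∧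
  (∀ x ∈ ((nbrs v : Set (V L)) \ {w}), ∀ y ∈ ((nbrs v : Set (V L)) \ {w}),
      isClusterSite c x → isClusterSite c y →
        connWithin c ((nbrs v : Set (V L)) \ {w}) x y) ∧
  (∀ x ∈ ((nbrs w : Set (V L)) \ {v}), ∀ y ∈ ((nbrs w : Set (V L)) \ {v}),
      isClusterSite c x → isClusterSite c y →
        connWithin c ((nbrs w : Set (V L)) \ {v}) x y)

/-- A valid compression move from `v` to the adjacent empty non-food site `w`. -/
def validMove (c : Conf L) (v w : V L) : Prop :=
  w ∈ nbrs v ∧ c.occ w = none ∧ c.food ≠ some w ∧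
    ((nbrs v).filter fun x => isClusterSite c x).card < 5 ∧
    (MoveProp1 c v w ∨ MoveProp2 c v w)

/-- `e(σ') - e(σ)`: the change in the number of edges between cluster particles caused by
moving the particle from `v` to `w` (computable locally). -/
def moveDelta (c : Conf L) (v w : V L) : ℤ :=
  (((nbrs w).filter fun x => x ≠ v ∧ isClusterSite c x).card : ℤ) -
    (((nbrs v).filter fun x => x ≠ w ∧ isClusterSite c x).card : ℤ)

/-- Step 2 (movement) of the algorithm for the activated particle at `v`: dispersion
particles perform a simple-exclusion random-walk step; compression particles perform a
Metropolis-filtered valid compression move with probability `min(1, λ^{e(σ')-e(σ)})`, and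
afterwards set their food bit according to food adjacency. -/
def movement (lam : ℝ) (c : Conf L) (v : V L) : PMF (Conf L) :=
  match c.occ v with
  | some CState.D =>
      (PMF.uniformOfFinset (dirFinset L) (dirFinset_nonempty L)).bind fun d =>
        PMF.pure
          (if c.occ (v + d) = none ∧ c.food ≠ some (v + d) then moveP c v (v + d) CState.D
           else c)
  | some (CState.C g _) =>
      (PMF.uniformOfFinset (dirFinset L) (dirFinset_nonempty L)).bind fun d =>
        if validMove c v (v + d) then
          (bernoulliENN (min 1 (ENNReal.ofReal (lam ^ moveDelta c v (v + d))))
              (min_le_left _ _)).bind fun b =>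
            PMF.pure
              (if b then
                  moveP c v (v + d) (CState.C g (if adjFood c (v + d) then true else false))
                else setSt c v (CState.C g (if adjFood c v then true else false)))
        else PMF.pure (setSt c v (CState.C g (if adjFood c v then true else false)))
  | _ => PMF.pure c

variable [NeZero L]

/-- The set of occupied (particle) vertices. -/
def occupiedSet (c : Conf L) : Finset (V L) :=
  Finset.univ.filter fun v => (c.occ v).isSome

/-- The number of particles. -/
def pcount (c : Conf L) : ℕ := (occupiedSet c).card

/-- One step of the Adaptive α-Compression Algorithm: a uniformly random particle is
activated and performs its state-change step followed by its movement step.  The food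
particle never changes during algorithm steps. -/
def compStep (p : ℝ≥0∞) (hp : p ≤ 1) (lam : ℝ) (c : Conf L) : PMF (Conf L) :=
  if h : (occupiedSet c).Nonempty then
    (PMF.uniformOfFinset _ h).bind fun v =>
      (stateChange p hp c v).bind fun c' => movement lam c' v
  else PMF.pure c

/-- `surviveP step goal t a` is the probability that a Markov chain with one-step kernel
`step` started at `a` has not visited the goal set within the first `t` steps. -/
def surviveP {α : Type*} (step : α → PMF α) (goal : α → Prop) : ℕ → α → ℝ≥0∞
  | 0, a => if goal a then 0 else 1
  | t + 1, a => if goal a then 0 else ∑' b, step a b * surviveP step goal t b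

/-- The expected hitting time of the goal set for the Markov chain with kernel `step`
started at `a`: `E[T] = ∑_{t ≥ 0} P(T > t)` (in `ℝ≥0∞`). -/
def ehit {α : Type*} (step : α → PMF α) (goal : α → Prop) (a : α) : ℝ≥0∞ :=
  ∑' t, surviveP step goal t a

/-! ### Auxiliary development -/

set_option linter.unusedSectionVars false
set_option maxHeartbeats 1000000

lemma mem_nbrs {v w : V L} : w ∈ nbrs v ↔ ∃ d ∈ dirFinset L, v + d = w := by
  simp only [nbrs, Finset.mem_image]

lemma neg_mem_dirFinset {d : V L} (hd : d ∈ dirFinset L) : -d ∈ dirFinset L := by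
  simp only [dirFinset, dirList, List.mem_toFinset, List.mem_cons, List.not_mem_nil,
    or_false] at hd ⊢
  rcases hd with rfl | rfl | rfl | rfl | rfl | rfl <;> simp [Prod.ext_iff]

lemma mem_nbrs_symm {v w : V L} (h : w ∈ nbrs v) : v ∈ nbrs w := by
  rcases mem_nbrs.1 h with ⟨d, hd, rfl⟩
  exact mem_nbrs.2 ⟨-d, neg_mem_dirFinset hd, by abel⟩

lemma not_mem_nbrs_self {v : V L} (h1 : (1 : ZMod L) ≠ 0) : v ∉ nbrs v := by
  intro hv
  rcases mem_nbrs.1 hv with ⟨d, hd, hvd⟩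
  have hd0 : d = 0 := by
    have h' : v + d = v + 0 := by simpa using hvd
    exact add_left_cancel h'
  subst hd0
  simp only [dirFinset, dirList, List.mem_toFinset, List.mem_cons, List.not_mem_nil,
    or_false] at hd
  rcases hd with h | h | h | h | h | h
  · exact h1 (congrArg Prod.fst h.symm)
  · exact h1 (by simpa using congrArg (fun x => -Prod.fst x) h.symm)
  · exact h1 (congrArg Prod.snd h.symm)
  · exact h1 (by simpa using congrArg (fun x => -Prod.snd x) h.symm)
  · exact h1 (congrArg Prod.fst h.symm)
  · exact h1 (by simpa using congrArg (fun x => -Prod.fst x) h.symm)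
/-- On the triangular lattice, adjacent vertices always share a common neighbour. -/
lemma common_nbr {v w : V L} (h : w ∈ nbrs v) : (nbrs v ∩ nbrs w).Nonempty := by
  rcases mem_nbrs.1 h with ⟨d, hd, rfl⟩
  simp only [dirFinset, dirList, List.mem_toFinset, List.mem_cons, List.not_mem_nil,
    or_false] at hd
  have mem : ∀ (d₁ d₂ : V L),
      d₁ ∈ dirList L → d₂ ∈ dirList L → v + d₁ = (v + d) + d₂ →
      (nbrs v ∩ nbrs (v + d)).Nonempty := by
    intro d₁ d₂ h₁ h₂ he
    refine ⟨v + d₁, Finset.mem_inter.2 ⟨mem_nbrs.2 ⟨d₁, List.mem_toFinset.2 h₁, rfl⟩,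
      mem_nbrs.2 ⟨d₂, List.mem_toFinset.2 h₂, he.symm⟩⟩⟩
  rcases hd with rfl | rfl | rfl | rfl | rfl | rfl
  · exact mem (1,1) (0,1) (by simp [dirList]) (by simp [dirList])
      (by rw [add_assoc]; congr 1; simp [Prod.ext_iff])
  · exact mem (-1,-1) (0,-1) (by simp [dirList]) (by simp [dirList])
      (by rw [add_assoc]; congr 1; simp [Prod.ext_iff])
  · exact mem (1,1) (1,0) (by simp [dirList]) (by simp [dirList])
      (by rw [add_assoc]; congr 1; simp [Prod.ext_iff])
  · exact mem (-1,-1) (-1,0) (by simp [dirList]) (by simp [dirList])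
      (by rw [add_assoc]; congr 1; simp [Prod.ext_iff])
  · exact mem (1,0) (0,-1) (by simp [dirList]) (by simp [dirList])
      (by rw [add_assoc]; congr 1; simp [Prod.ext_iff])
  · exact mem (-1,0) (0,1) (by simp [dirList]) (by simp [dirList])
      (by rw [add_assoc]; congr 1; simp [Prod.ext_iff])

/-- With no food, cluster sites are exactly token sites. -/
lemma cluster_eq_token {c : Conf L} (hf : c.food = none) {x : V L} :
    isClusterSite c x ↔ isTokenSite c x := by
  simp [isClusterSite, hf]

lemma adjFood_none {c : Conf L} (hf : c.food = none) (x : V L) : ¬ adjFood c x := by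
  rintro ⟨f, hfd, -⟩; rw [hf] at hfd; cases hfd

/-- A witness: a particle in state `DT`, `C_F` or `C_{GF}`. -/
def isWitness (c : Conf L) (w : V L) : Prop :=
  c.occ w = some CState.DT ∨ ∃ g, c.occ w = some (CState.C g true)

/-- Weight of a state for the potential function. -/
def wt : Option CState → ℕ
  | none => 0
  | some CState.D => 0
  | some CState.DT => 1
  | some (CState.C g _) => if g then 2 else 1

lemma wt_le_two (o : Option CState) : wt o ≤ 2 := by
  rcases o with _ | (_ | _ | ⟨g, f⟩) <;> simp [wt] <;> split <;> simp

/-- The potential function: total weight of all particles. -/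
def Phi (c : Conf L) : ℕ := ∑ x : V L, wt (c.occ x)

lemma Phi_eq_zero_iff {c : Conf L} :
    Phi c = 0 ↔ ∀ v s, c.occ v = some s → s = CState.D := by
  unfold Phi
  rw [Finset.sum_eq_zero_iff]
  constructor
  · intro h x s hs
    have := h x (Finset.mem_univ x)
    rw [hs] at this
    rcases s with _ | _ | ⟨g, f⟩
    · rfl
    · simp [wt] at this
    · simp only [wt] at this; split at this <;> simp at this
  · intro h x _
    rcases hx : c.occ x with _ | s
    · simp [wt]
    · rw [h x s hx]; simp [wt]

lemma wt_pos_of_token {c : Conf L} {x : V L} (h : isTokenSite c x) : 1 ≤ wt (c.occ x) := by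
  rcases h with ⟨s, hs, hD⟩
  rw [hs]
  rcases s with _ | _ | ⟨g, f⟩
  · exact absurd rfl hD
  · simp [wt]
  · simp only [wt]; split <;> simp
/-! ### Generic transfer lemmas -/

lemma rtg_mono {α : Type*} {r p : α → α → Prop} (h : ∀ a b, r a b → p a b) {a b : α}
    (hab : Relation.ReflTransGen r a b) : Relation.ReflTransGen p a b :=
  Relation.ReflTransGen.mono h a b hab

lemma compReach_mono {c c' : Conf L}
    (h : ∀ x, isTokenSite c x → isTokenSite c' x) {x u : V L}
    (hr : compReach c x u) : compReach c' x u :=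
  rtg_mono (fun a b hab => ⟨h a hab.1, h b hab.2.1, hab.2.2⟩) hr

lemma inv_transfer {c c' : Conf L}
    (htok : ∀ x, isTokenSite c' x ↔ isTokenSite c x)
    (hwit : ∀ x, isWitness c x → isWitness c' x)
    (h : StateInvariant c) : StateInvariant c' := by
  intro x hx
  obtain ⟨u, hr, hu⟩ := h x ((htok x).1 hx)
  exact ⟨u, compReach_mono (fun y => (htok y).2) hr, hwit u hu⟩

lemma token_of_eq {c c' : Conf L} {x : V L} (h : c'.occ x = c.occ x) :
    isTokenSite c' x ↔ isTokenSite c x := by simp [isTokenSite, h]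

lemma witness_of_eq {c c' : Conf L} {x : V L} (h : c'.occ x = c.occ x) :
    isWitness c' x ↔ isWitness c x := by simp [isWitness, h]

/-! ### `spreadDT` lemmas -/

lemma spread_occ_self (c : Conf L) (v : V L) : (spreadDT c v).occ v = some CState.D := by
  simp [spreadDT]

lemma spread_occ_ne {c : Conf L} {v x : V L} (hx : x ≠ v) :
    (spreadDT c v).occ x = c.occ x ∨
      (x ∈ nbrs v ∧ (spreadDT c v).occ x = some CState.DT ∧
        ∃ g f, c.occ x = some (CState.C g f)) := by
  by_cases h : x ∈ nbrs v ∧ ∃ g f, c.occ x = some (CState.C g f)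
  · exact Or.inr ⟨h.1, by simp only [spreadDT]; rw [if_neg hx, if_pos h], h.2⟩
  · exact Or.inl (by simp only [spreadDT]; rw [if_neg hx, if_neg h])

lemma spread_token_iff {c : Conf L} {v x : V L} (hx : x ≠ v) :
    isTokenSite (spreadDT c v) x ↔ isTokenSite c x := by
  rcases spread_occ_ne (c := c) (v := v) hx with h | ⟨-, h1, g, f, h2⟩
  · exact token_of_eq h
  · constructor
    · intro _; exact ⟨_, h2, by simp⟩
    · intro _; exact ⟨_, h1, by simp⟩

lemma spread_not_token_self {c : Conf L} {v : V L} : ¬ isTokenSite (spreadDT c v) v := by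
  rintro ⟨s, hs, hD⟩
  rw [spread_occ_self] at hs
  exact hD (Option.some_injective _ hs).symm

lemma spread_wit_pres {c : Conf L} {v x : V L} (hx : x ≠ v) (h : isWitness c x) :
    isWitness (spreadDT c v) x := by
  rcases spread_occ_ne (c := c) (v := v) hx with he | ⟨-, h1, -⟩
  · exact (witness_of_eq he).2 h
  · exact Or.inl h1

lemma spread_wit_nbr {c : Conf L} {v x : V L} (hx : x ≠ v) (hnb : x ∈ nbrs v)
    (htok : isTokenSite c x) : isWitness (spreadDT c v) x := by
  rcases spread_occ_ne (c := c) (v := v) hx with he | ⟨-, h1, -⟩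
  · obtain ⟨s, hs, hD⟩ := htok
    rcases s with _ | _ | ⟨g, f⟩
    · exact absurd rfl hD
    · have : (spreadDT c v).occ x = c.occ x := by
        simp only [spreadDT]
        rw [if_neg hx, if_neg]
        rintro ⟨-, g, f, hC⟩
        rw [hs] at hC
        simp at hC
      exact Or.inl (by rw [this, hs])
    · have : (spreadDT c v).occ x = some CState.DT := by
        simp only [spreadDT]
        rw [if_neg hx, if_pos ⟨hnb, g, f, hs⟩]
      exact Or.inl this
  · exact Or.inl h1

lemma spread_reach {c : Conf L} {v : V L} {x u : V L}
    (hr : compReach c x u) (hx : x ≠ v) :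
    ∃ u', compReach (spreadDT c v) x u' ∧
      ((u' = u ∧ u ≠ v) ∨ isWitness (spreadDT c v) u') := by
  induction hr with
  | refl => exact ⟨x, Relation.ReflTransGen.refl, Or.inl ⟨rfl, hx⟩⟩
  | @tail m u hxm hstep ih =>
    obtain ⟨tokm, toku, hnb⟩ := hstep
    rcases ih with ⟨m', pth, (⟨rfl, hm⟩ | hw)⟩
    · by_cases hu : u = v
      · refine ⟨m', pth, Or.inr (spread_wit_nbr hm ?_ tokm)⟩
        subst hu
        exact mem_nbrs_symm hnb
      · exact ⟨u, pth.tail ⟨(spread_token_iff hm).2 tokm, (spread_token_iff hu).2 toku, hnb⟩,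
          Or.inl ⟨rfl, hu⟩⟩
    · exact ⟨m', pth, Or.inr hw⟩

lemma spread_inv {c : Conf L} {v : V L} (hI : StateInvariant c) :
    StateInvariant (spreadDT c v) := by
  intro x hx
  have hxv : x ≠ v := by rintro rfl; exact spread_not_token_self hx
  obtain ⟨u, hr, hu⟩ := hI x ((spread_token_iff hxv).1 hx)
  obtain ⟨u', pth, hcase⟩ := spread_reach hr hxv
  rcases hcase with ⟨rfl, huv⟩ | hw
  · exact ⟨u', pth, spread_wit_pres huv hu⟩
  · exact ⟨u', pth, hw⟩

lemma spread_wt_le (c : Conf L) (v : V L) (x : V L) :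
    wt ((spreadDT c v).occ x) ≤ wt (c.occ x) := by
  by_cases hx : x = v
  · subst hx; rw [spread_occ_self]; simp [wt]
  · rcases spread_occ_ne (c := c) (v := v) hx with he | ⟨-, h1, g, f, h2⟩
    · rw [he]
    · rw [h1, h2]; simp only [wt]; split <;> simp

lemma spread_phi {c : Conf L} {v : V L} (htok : isTokenSite c v) :
    Phi (spreadDT c v) + 1 ≤ Phi c := by
  have hlt : Phi (spreadDT c v) < Phi c := by
    apply Finset.sum_lt_sum (fun x _ => spread_wt_le c v x)
    refine ⟨v, Finset.mem_univ v, ?_⟩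
    rw [spread_occ_self]
    calc wt (some CState.D) = 0 := by simp [wt]
    _ < 1 := one_pos
    _ ≤ wt (c.occ v) := wt_pos_of_token htok
  omega
/-! ### Valid-move lemmas -/

lemma compReach_symm {c : Conf L} : Symmetric (compReach c) :=
  fun x y h => by
    induction h with
    | refl => exact Relation.ReflTransGen.refl
    | tail _ hs ih => exact Relation.ReflTransGen.head ⟨hs.2.1, hs.1, mem_nbrs_symm hs.2.2⟩ ih

lemma one_ne_zero_of_ne {v w : V L} (h : v ≠ w) : (1 : ZMod L) ≠ 0 := by
  intro h1
  have hall : ∀ a : ZMod L, a = 0 := fun a => by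
    rw [← mul_one a, h1, mul_zero]
  exact h (Prod.ext ((hall v.1).trans (hall w.1).symm) ((hall v.2).trans (hall w.2).symm))

section MoveLemmas

variable {c : Conf L} {v w : V L} {g : Bool}
  (hf : c.food = none) (hocc : c.occ v = some (CState.C g false))
  (hvm : validMove c v w)

include hocc hvm

lemma vm_ne : v ≠ w := fun h => by
  have := hvm.2.1; rw [← h, hocc] at this; cases this

lemma vm_not_self_nbr : v ∉ nbrs v :=
  not_mem_nbrs_self (one_ne_zero_of_ne (vm_ne hocc hvm))

lemma vm_w_not_self_nbr : w ∉ nbrs w :=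
  not_mem_nbrs_self (one_ne_zero_of_ne (vm_ne hocc hvm))

lemma vm_prop1 : MoveProp1 c v w := by
  rcases hvm.2.2.2.2 with h | h
  · exact h
  · exact absurd h.1 (Finset.Nonempty.ne_empty (common_nbr hvm.1))

end MoveLemmas

section MoveB

variable {c : Conf L} {v w : V L} {g g' : Bool}

/-- Occupancy facts for the moved configuration. -/
lemma moveP_occ_w (c : Conf L) (v w : V L) (s : CState) : (moveP c v w s).occ w = some s := by
  simp [moveP]

lemma moveP_occ_v (c : Conf L) (v w : V L) (s : CState) (h : v ≠ w) :
    (moveP c v w s).occ v = none := by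
  simp [moveP, Function.update_of_ne h]

lemma moveP_occ_other (c : Conf L) {v w x : V L} (s : CState) (hxv : x ≠ v) (hxw : x ≠ w) :
    (moveP c v w s).occ x = c.occ x := by
  simp [moveP, Function.update_of_ne hxv, Function.update_of_ne hxw]

variable (hf : c.food = none) (hI : StateInvariant c)
  (hocc : c.occ v = some (CState.C g false)) (hvm : validMove c v w)

include hf hocc hvm

lemma mv_tok_b_w : isTokenSite (moveP c v w (CState.C g' false)) w :=
  ⟨_, moveP_occ_w c v w _, by simp⟩

lemma mv_tok_transfer {x : V L} (hxv : x ≠ v) (hxw : x ≠ w)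
    (h : isTokenSite c x) : isTokenSite (moveP c v w (CState.C g' false)) x :=
  (token_of_eq (moveP_occ_other c _ hxv hxw)).2 h

/-- `connWithin` paths inside `NNset v w` survive the move. -/
lemma mv_connWithin {x y : V L} (h : connWithin c (NNset v w) x y) :
    compReach (moveP c v w (CState.C g' false)) x y := by
  refine rtg_mono (fun a b hab => ?_) h
  obtain ⟨haA, hbA, hca, hcb, hnb⟩ := hab
  have hav : a ≠ v := fun h => by simp [NNset, h] at haA
  have haw : a ≠ w := fun h => by simp [NNset, h] at haA
  have hbv : b ≠ v := fun h => by simp [NNset, h] at hbA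
  have hbw : b ≠ w := fun h => by simp [NNset, h] at hbA
  exact ⟨mv_tok_transfer hf hocc hvm hav haw ((cluster_eq_token hf).1 hca),
    mv_tok_transfer hf hocc hvm hbv hbw ((cluster_eq_token hf).1 hcb), hnb⟩

/-- Bridge: after the move, the particle at `w` reaches every token neighbour of `v`. -/
lemma mv_bridge {a : V L} (hanb : a ∈ nbrs v) (hatok : isTokenSite c a) :
    compReach (moveP c v w (CState.C g' false)) w a := by
  have hav : a ≠ v := fun h => vm_not_self_nbr hocc hvm (h ▸ hanb)
  have haw : a ≠ w := fun h => by
    obtain ⟨s, hs, -⟩ := hatok; rw [h, hvm.2.1] at hs; cases hs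
  have haNN : a ∈ NNset v w := by
    refine ⟨Or.inl (by exact_mod_cast hanb), ?_⟩
    simp [hav, haw]
  obtain ⟨y, hy, hcy, hconn⟩ := (vm_prop1 hocc hvm).2 a haNN (Or.inr hatok)
  have hyv : y ≠ v := fun h => vm_not_self_nbr hocc hvm (h ▸ (Finset.mem_inter.1 hy).1)
  have hyw : y ≠ w := fun h => vm_w_not_self_nbr hocc hvm (h ▸ (Finset.mem_inter.1 hy).2)
  have hytok : isTokenSite c y := (cluster_eq_token hf).1 hcy
  have step1 : compReach (moveP c v w (CState.C g' false)) w y :=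
    Relation.ReflTransGen.single
      ⟨mv_tok_b_w hf hocc hvm, mv_tok_transfer hf hocc hvm hyv hyw hytok,
        (Finset.mem_inter.1 hy).2⟩
  exact step1.trans (compReach_symm (mv_connWithin hf hocc hvm hconn))

/-- Rerouting paths around the moved particle. -/
lemma mv_reroute {x u : V L} (hr : compReach c x u) (hx : x ≠ v) :
    (u ≠ v → compReach (moveP c v w (CState.C g' false)) x u) ∧
    (u = v → ∃ a, a ∈ nbrs v ∧ isTokenSite c a ∧ a ≠ v ∧
        compReach (moveP c v w (CState.C g' false)) x a) := by
  induction hr with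
  | refl => exact ⟨fun _ => Relation.ReflTransGen.refl, fun h => absurd h hx⟩
  | @tail m u hxm hstep ih =>
    obtain ⟨tokm, toku, hnb⟩ := hstep
    constructor
    · intro hu
      by_cases hm : m = v
      · obtain ⟨a, hanb, hatok, hav, pba⟩ := ih.2 hm
        rw [hm] at hnb
        have hba : compReach (moveP c v w (CState.C g' false)) w a :=
          mv_bridge hf hocc hvm hanb hatok
        have hbu : compReach (moveP c v w (CState.C g' false)) w u :=
          mv_bridge hf hocc hvm hnb toku
        exact (pba.trans (compReach_symm hba)).trans hbu
      · have hmw : m ≠ w := fun h => by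
          obtain ⟨s, hs, -⟩ := tokm; rw [h, hvm.2.1] at hs; cases hs
        have huw : u ≠ w := fun h => by
          obtain ⟨s, hs, -⟩ := toku; rw [h, hvm.2.1] at hs; cases hs
        exact (ih.1 hm).tail ⟨mv_tok_transfer hf hocc hvm hm hmw tokm,
          mv_tok_transfer hf hocc hvm hu huw toku, hnb⟩
    · intro huv
      rw [huv] at hnb
      by_cases hm : m = v
      · rw [hm] at hnb; exact absurd hnb (vm_not_self_nbr hocc hvm)
      · exact ⟨m, mem_nbrs_symm hnb, tokm, hm, ih.1 hm⟩

include hI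

/-- The state invariant is preserved by a valid compression move. -/
lemma mv_inv : StateInvariant (moveP c v w (CState.C g' false)) := by
  have hvw : v ≠ w := vm_ne hocc hvm
  have hwit_ne : ∀ u, isWitness c u → u ≠ v := by
    intro u hu huv
    rw [huv] at hu
    rcases hu with h | ⟨g₀, h⟩
    · rw [hocc] at h; exact CState.noConfusion (Option.some_injective _ h)
    · rw [hocc] at h
      have := Option.some_injective _ h
      exact Bool.noConfusion (congrArg (fun s => match s with
        | CState.C _ f => f | _ => false) this)
  have hwit_new : ∀ u, isWitness c u → isWitness (moveP c v w (CState.C g' false)) u := by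
    intro u hu
    have huv := hwit_ne u hu
    have huw : u ≠ w := by
      intro huw
      rw [huw] at hu
      rcases hu with h | ⟨g₀, h⟩ <;> (rw [hvm.2.1] at h; cases h)
    exact (witness_of_eq (moveP_occ_other c _ huv huw)).2 hu
  intro x hx
  by_cases hxw : x = w
  · subst hxw
    have htokv : isTokenSite c v := ⟨_, hocc, by simp⟩
    obtain ⟨u, hr, hwu⟩ := hI v htokv
    have huv : u ≠ v := hwit_ne u hwu
    rcases Relation.ReflTransGen.cases_head hr with h | ⟨a, ⟨-, hatok, hanb⟩, hr'⟩
    · exact absurd h.symm huv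
    · have hav : a ≠ v := fun h => vm_not_self_nbr hocc hvm (h ▸ hanb)
      exact ⟨u, (mv_bridge hf hocc hvm hanb hatok).trans
        ((mv_reroute hf hocc hvm hr' hav).1 huv), hwit_new u hwu⟩
  · have hxv : x ≠ v := by
      intro hxv
      obtain ⟨s, hs, -⟩ := hx
      rw [hxv, moveP_occ_v c v w _ hvw] at hs
      cases hs
    have hxtok : isTokenSite c x := by
      obtain ⟨s, hs, hD⟩ := hx
      rw [moveP_occ_other c _ hxv hxw] at hs
      exact ⟨s, hs, hD⟩
    obtain ⟨u, hr, hwu⟩ := hI x hxtok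
    exact ⟨u, (mv_reroute hf hocc hvm hr hxv).1 (hwit_ne u hwu), hwit_new u hwu⟩

end MoveB

/-- Splitting a sum over the torus at two distinct vertices. -/
lemma sum_two_split (f : V L → ℕ) {v w : V L} (h : v ≠ w) :
    ∑ x : V L, f x = (∑ x ∈ Finset.univ \ {v, w}, f x) + (f v + f w) := by
  rw [← Finset.sum_pair h, Finset.sum_sdiff (Finset.subset_univ _)]

lemma mv_phi {c : Conf L} {v w : V L} {g : Bool}
    (hocc : c.occ v = some (CState.C g false)) (hwe : c.occ w = none) (hvw : v ≠ w) :
    Phi (moveP c v w (CState.C g false)) = Phi c := by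
  unfold Phi
  rw [sum_two_split _ hvw, sum_two_split (fun x => wt (c.occ x)) hvw]
  have h1 : ∀ x ∈ Finset.univ \ ({v, w} : Finset (V L)),
      wt ((moveP c v w (CState.C g false)).occ x) = wt (c.occ x) := by
    intro x hx
    simp only [Finset.mem_sdiff, Finset.mem_insert, Finset.mem_singleton] at hx
    rw [moveP_occ_other c _ (fun h => hx.2 (Or.inl h)) (fun h => hx.2 (Or.inr h))]
  rw [Finset.sum_congr rfl h1]
  rw [moveP_occ_v c v w _ hvw, moveP_occ_w c v w, hocc, hwe]
  ring
/-! ### Other state-change cases -/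

lemma setSt_self {c : Conf L} {v : V L} {s : CState} (h : c.occ v = some s) :
    setSt c v s = c := by
  have : Function.update c.occ v (some s) = c.occ := by
    rw [← h]; exact Function.update_eq_self v c.occ
  cases c; simp only [setSt]; congr 1

/-- The configuration after a `D`-particle at `v` consumes a growth token at `w`. -/
lemma consume_props {c : Conf L} {v w : V L} {f : Bool}
    (hf : c.food = none) (hI : StateInvariant c)
    (hv : c.occ v = some CState.D) (hw : c.occ w = some (CState.C true f))
    (hnb : w ∈ nbrs v) :
    (setSt ⟨Function.update c.occ w (clearG (c.occ w)), c.food⟩ v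
        (CState.C false false)).food = none ∧
    StateInvariant (setSt ⟨Function.update c.occ w (clearG (c.occ w)), c.food⟩ v
        (CState.C false false)) ∧
    Phi (setSt ⟨Function.update c.occ w (clearG (c.occ w)), c.food⟩ v
        (CState.C false false)) = Phi c := by
  set b := setSt ⟨Function.update c.occ w (clearG (c.occ w)), c.food⟩ v
    (CState.C false false) with hb
  have hwv : w ≠ v := fun h => by rw [h, hv] at hw; simp at hw
  have hclear : clearG (c.occ w) = some (CState.C false f) := by rw [hw]; rfl
  have hoccv : b.occ v = some (CState.C false false) := by simp [hb, setSt]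
  have hoccw : b.occ w = some (CState.C false f) := by
    simp [hb, setSt, Function.update_of_ne hwv, hclear]
  have hocco : ∀ x, x ≠ v → x ≠ w → b.occ x = c.occ x := by
    intro x hxv hxw
    simp [hb, setSt, Function.update_of_ne hxv, Function.update_of_ne hxw]
  have hbf : b.food = none := hf
  refine ⟨hbf, ?_, ?_⟩
  · -- state invariant
    have htok : ∀ x, x ≠ v → (isTokenSite b x ↔ isTokenSite c x) := by
      intro x hxv
      by_cases hxw : x = w
      · subst hxw
        constructor
        · intro _; exact ⟨_, hw, by simp⟩
        · intro _; exact ⟨_, hoccw, by simp⟩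
      · exact token_of_eq (hocco x hxv hxw)
    have hwit : ∀ x, x ≠ v → isWitness c x → isWitness b x := by
      intro x hxv hx
      by_cases hxw : x = w
      · subst hxw
        rcases hx with h | ⟨g₀, h⟩
        · rw [hw] at h; simp at h
        · rw [hw] at h
          have : f = true := by
            have := Option.some_injective _ h
            cases this; rfl
          exact Or.inr ⟨false, by rw [hoccw, this]⟩
      · rcases hx with h | ⟨g₀, h⟩
        · exact Or.inl (by rw [hocco x hxv hxw, h])
        · exact Or.inr ⟨g₀, by rw [hocco x hxv hxw, h]⟩
    have hreach : ∀ x u, compReach c x u → compReach b x u := by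
      refine fun x u h => rtg_mono (fun a a' ha => ?_) h
      obtain ⟨ta, ta', hn⟩ := ha
      have hav : a ≠ v := fun h => by
        obtain ⟨s, hs, hD⟩ := ta; rw [h, hv] at hs
        exact absurd (Option.some_injective _ hs).symm hD
      have hav' : a' ≠ v := fun h => by
        obtain ⟨s, hs, hD⟩ := ta'; rw [h, hv] at hs
        exact absurd (Option.some_injective _ hs).symm hD
      exact ⟨(htok a hav).2 ta, (htok a' hav').2 ta', hn⟩
    intro x hx
    by_cases hxv : x = v
    · subst hxv
      have hwtok : isTokenSite c w := ⟨_, hw, by simp⟩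
      obtain ⟨u, hr, hwu⟩ := hI w hwtok
      have huv : u ≠ x := by
        intro h
        rcases hwu with h' | ⟨g₀, h'⟩ <;> (rw [h, hv] at h'; simp at h')
      refine ⟨u, ?_, hwit u huv hwu⟩
      have hstep : compReach b x w :=
        Relation.ReflTransGen.single ⟨⟨_, hoccv, by simp⟩, (htok w hwv).2 hwtok, hnb⟩
      exact hstep.trans (hreach w u hr)
    · obtain ⟨u, hr, hwu⟩ := hI x ((htok x hxv).1 hx)
      have huv : u ≠ v := by
        intro h
        rcases hwu with h' | ⟨g₀, h'⟩ <;> (rw [h, hv] at h'; simp at h')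
      exact ⟨u, hreach x u hr, hwit u huv hwu⟩
  · -- potential unchanged
    unfold Phi
    rw [sum_two_split _ (Ne.symm hwv), sum_two_split (fun x => wt (c.occ x)) (Ne.symm hwv)]
    have h1 : ∀ x ∈ Finset.univ \ ({v, w} : Finset (V L)),
        wt (b.occ x) = wt (c.occ x) := by
      intro x hx
      simp only [Finset.mem_sdiff, Finset.mem_insert, Finset.mem_singleton] at hx
      rw [hocco x (fun h => hx.2 (Or.inl h)) (fun h => hx.2 (Or.inr h))]
    rw [Finset.sum_congr rfl h1, hoccv, hoccw, hv, hw]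
    simp [wt]

/-- The configuration after a growth token is passed from `v` to `u`. -/
lemma pass_props {c : Conf L} {v u : V L} {f f' : Bool}
    (hf : c.food = none) (hI : StateInvariant c)
    (hv : c.occ v = some (CState.C true f)) (hu : c.occ u = some (CState.C false f')) :
    (setSt (setSt c v (CState.C false f)) u (CState.C true f')).food = none ∧
    StateInvariant (setSt (setSt c v (CState.C false f)) u (CState.C true f')) ∧
    Phi (setSt (setSt c v (CState.C false f)) u (CState.C true f')) = Phi c := by
  set b := setSt (setSt c v (CState.C false f)) u (CState.C true f') with hb
  have huv : u ≠ v := fun h => by rw [h, hv] at hu; simp at hu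
  have hoccv : b.occ v = some (CState.C false f) := by
    simp [hb, setSt, Function.update_of_ne (Ne.symm huv)]
  have hoccu : b.occ u = some (CState.C true f') := by simp [hb, setSt]
  have hocco : ∀ x, x ≠ v → x ≠ u → b.occ x = c.occ x := by
    intro x hxv hxu
    simp [hb, setSt, Function.update_of_ne hxv, Function.update_of_ne hxu]
  have htok : ∀ x, isTokenSite b x ↔ isTokenSite c x := by
    intro x
    by_cases hxv : x = v
    · subst hxv
      exact ⟨fun _ => ⟨_, hv, by simp⟩, fun _ => ⟨_, hoccv, by simp⟩⟩
    by_cases hxu : x = u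
    · subst hxu
      exact ⟨fun _ => ⟨_, hu, by simp⟩, fun _ => ⟨_, hoccu, by simp⟩⟩
    · exact token_of_eq (hocco x hxv hxu)
  have hwit : ∀ x, isWitness c x → isWitness b x := by
    intro x hx
    by_cases hxv : x = v
    · subst hxv
      rcases hx with h | ⟨g₀, h⟩
      · rw [hv] at h; simp at h
      · rw [hv] at h
        have hfe : f = true := by
          have := Option.some_injective _ h; cases this; rfl
        exact Or.inr ⟨false, by rw [hoccv, hfe]⟩
    by_cases hxu : x = u
    · subst hxu
      rcases hx with h | ⟨g₀, h⟩
      · rw [hu] at h; simp at h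
      · rw [hu] at h
        have hfe : f' = true := by
          have := Option.some_injective _ h; cases this; rfl
        exact Or.inr ⟨true, by rw [hoccu, hfe]⟩
    · rcases hx with h | ⟨g₀, h⟩
      · exact Or.inl (by rw [hocco x hxv hxu, h])
      · exact Or.inr ⟨g₀, by rw [hocco x hxv hxu, h]⟩
  refine ⟨hf, inv_transfer htok hwit hI, ?_⟩
  unfold Phi
  rw [sum_two_split _ huv, sum_two_split (fun x => wt (c.occ x)) huv]
  have h1 : ∀ x ∈ Finset.univ \ ({u, v} : Finset (V L)),
      wt (b.occ x) = wt (c.occ x) := by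
    intro x hx
    simp only [Finset.mem_sdiff, Finset.mem_insert, Finset.mem_singleton] at hx
    rw [hocco x (fun h => hx.2 (Or.inr h)) (fun h => hx.2 (Or.inl h))]
  rw [Finset.sum_congr rfl h1, hoccv, hoccu, hv, hu]
  simp [wt]

/-- A simple-exclusion random-walk step of a dispersed particle. -/
lemma dmove_props {c : Conf L} {v u : V L}
    (hf : c.food = none) (hI : StateInvariant c)
    (hv : c.occ v = some CState.D) (hu : c.occ u = none) :
    (moveP c v u CState.D).food = none ∧ StateInvariant (moveP c v u CState.D) ∧
    Phi (moveP c v u CState.D) = Phi c := by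
  set b := moveP c v u CState.D with hb
  by_cases huv : u = v
  · exfalso; rw [huv] at hu; rw [hu] at hv; cases hv
  · have hoccv : b.occ v = none := by
      simp [hb, moveP, Function.update_of_ne (Ne.symm huv)]
    have hoccu : b.occ u = some CState.D := by simp [hb, moveP]
    have hocco : ∀ x, x ≠ v → x ≠ u → b.occ x = c.occ x := by
      intro x hxv hxu
      simp [hb, moveP, Function.update_of_ne hxv, Function.update_of_ne hxu]
    have htok : ∀ x, isTokenSite b x ↔ isTokenSite c x := by
      intro x
      by_cases hxv : x = v
      · subst hxv
        constructor
        · rintro ⟨s, hs, -⟩; rw [hoccv] at hs; cases hs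
        · rintro ⟨s, hs, hD⟩; rw [hv] at hs
          exact absurd (Option.some_injective _ hs).symm hD
      by_cases hxu : x = u
      · subst hxu
        constructor
        · rintro ⟨s, hs, hD⟩; rw [hoccu] at hs
          exact absurd (Option.some_injective _ hs).symm hD
        · rintro ⟨s, hs, -⟩; rw [hu] at hs; cases hs
      · exact token_of_eq (hocco x hxv hxu)
    have hwit : ∀ x, isWitness c x → isWitness b x := by
      intro x hx
      by_cases hxv : x = v
      · subst hxv
        rcases hx with h | ⟨g₀, h⟩ <;> (rw [hv] at h; simp at h)
      by_cases hxu : x = u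
      · subst hxu
        rcases hx with h | ⟨g₀, h⟩ <;> (rw [hu] at h; simp at h)
      · rcases hx with h | ⟨g₀, h⟩
        · exact Or.inl (by rw [hocco x hxv hxu, h])
        · exact Or.inr ⟨g₀, by rw [hocco x hxv hxu, h]⟩
    refine ⟨hf, inv_transfer htok hwit hI, ?_⟩
    unfold Phi
    rw [sum_two_split _ huv, sum_two_split (fun x => wt (c.occ x)) huv]
    have h1 : ∀ x ∈ Finset.univ \ ({u, v} : Finset (V L)),
        wt (b.occ x) = wt (c.occ x) := by
      intro x hx
      simp only [Finset.mem_sdiff, Finset.mem_insert, Finset.mem_singleton] at hx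
      rw [hocco x (fun h => hx.2 (Or.inr h)) (fun h => hx.2 (Or.inl h))]
    rw [Finset.sum_congr rfl h1, hoccv, hoccu, hv, hu]
    ring
/-! ### Support analysis of the algorithm's kernels -/

lemma mem_support_bind {α β : Type*} {p : PMF α} {f : α → PMF β} {b : β}
    (h : b ∈ (p.bind f).support) : ∃ a ∈ p.support, b ∈ (f a).support := by
  simpa [PMF.mem_support_iff, PMF.support_bind] using h

lemma eq_of_mem_support_pure {α : Type*} {a b : α} (h : b ∈ (PMF.pure a).support) :
    b = a := by simpa [PMF.support_pure] using h

/-- Shape of the activated site after the state-change step. -/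
def GoodShape (c : Conf L) (v : V L) : Prop :=
  c.occ v = none ∨ c.occ v = some CState.D ∨ ∃ g, c.occ v = some (CState.C g false)

lemma stateChange_support {p : ℝ≥0∞} {hp : p ≤ 1} {c : Conf L}
    (hf : c.food = none) (hI : StateInvariant c) (v : V L) {b : Conf L}
    (hb : b ∈ (stateChange p hp c v).support) :
    b.food = none ∧ StateInvariant b ∧ Phi b ≤ Phi c ∧ GoodShape b v ∧
      (isWitness c v → Phi b + 1 ≤ Phi c) := by
  rcases hocc : c.occ v with _ | s
  · -- no particle at v
    rw [stateChange, hocc] at hb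
    have hbc := eq_of_mem_support_pure hb
    subst hbc
    refine ⟨hf, hI, le_rfl, Or.inl hocc, ?_⟩
    rintro (h | ⟨g, h⟩) <;> (rw [hocc] at h; cases h)
  · rcases s with _ | _ | ⟨g, f⟩
    · -- D particle
      rw [stateChange, hocc, if_neg (adjFood_none hf v)] at hb
      have hwit : ¬ isWitness c v := by
        rintro (h | ⟨g, h⟩) <;> (rw [hocc] at h; simp at h)
      by_cases hG : ((nbrs v).filter fun w => ∃ f, c.occ w = some (CState.C true f)).Nonempty
      · rw [dif_pos hG] at hb
        obtain ⟨w, hw, hb1⟩ := mem_support_bind hb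
        obtain ⟨bb, -, hb2⟩ := mem_support_bind hb1
        have hbc := eq_of_mem_support_pure hb2
        rw [PMF.support_uniformOfFinset, Finset.mem_coe, Finset.mem_filter] at hw
        obtain ⟨hwnb, f, hwC⟩ := hw
        cases bb
        · subst hbc
          exact ⟨hf, hI, le_rfl, Or.inr (Or.inl hocc), fun h => absurd h hwit⟩
        · simp only [if_pos] at hbc
          subst hbc
          obtain ⟨h1, h2, h3⟩ := consume_props hf hI hocc hwC hwnb
          refine ⟨h1, h2, le_of_eq h3, Or.inr (Or.inr ⟨false, ?_⟩), fun h => absurd h hwit⟩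
          simp [setSt]
      · rw [dif_neg hG] at hb
        have hbc := eq_of_mem_support_pure hb
        subst hbc
        exact ⟨hf, hI, le_rfl, Or.inr (Or.inl hocc), fun h => absurd h hwit⟩
    · -- DT particle
      rw [stateChange, hocc] at hb
      have hbc := eq_of_mem_support_pure hb
      subst hbc
      have htok : isTokenSite c v := ⟨_, hocc, by simp⟩
      refine ⟨hf, spread_inv hI, le_of_add_le_left (spread_phi htok),
        Or.inr (Or.inl (spread_occ_self c v)), fun _ => spread_phi htok⟩
    · -- C g f particle
      cases f
      · -- food bit false: no spread
        simp only [stateChange, hocc, adjFood_none hf v, Bool.false_eq_true,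
          Bool.true_eq_false, false_and, and_false, true_and, true_or, false_or, or_false,
          not_false_iff, and_true, if_false, if_true, ite_false, ite_true,
          PMF.support_pure, Set.mem_singleton_iff] at hb
        have hwit : ¬ isWitness c v := by
          rintro (h | ⟨g₀, h⟩) <;> (rw [hocc] at h; simp at h)
        cases g
        · -- no growth token: nothing happens
          rw [if_neg (by decide : ¬ (false = true)), PMF.support_pure,
            Set.mem_singleton_iff] at hb
          subst hb
          exact ⟨hf, hI, le_rfl, Or.inr (Or.inr ⟨false, hocc⟩), fun h => absurd h hwit⟩
        · -- pass the growth token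
          rw [if_pos rfl] at hb
          obtain ⟨d, -, hb1⟩ := mem_support_bind hb
          rcases hu : c.occ (v + d) with _ | (_ | _ | ⟨g', f'⟩) <;>
            simp only [hu, PMF.support_pure, Set.mem_singleton_iff] at hb1
          · subst hb1
            exact ⟨hf, hI, le_rfl, Or.inr (Or.inr ⟨true, hocc⟩), fun h => absurd h hwit⟩
          · subst hb1
            exact ⟨hf, hI, le_rfl, Or.inr (Or.inr ⟨true, hocc⟩), fun h => absurd h hwit⟩
          · subst hb1
            exact ⟨hf, hI, le_rfl, Or.inr (Or.inr ⟨true, hocc⟩), fun h => absurd h hwit⟩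
          · cases g'
            · subst hb1
              obtain ⟨h1, h2, h3⟩ := pass_props hf hI hocc hu
              have huv : v + d ≠ v := by
                intro h; rw [h, hocc] at hu; simp at hu
              refine ⟨h1, h2, le_of_eq h3, Or.inr (Or.inr ⟨false, ?_⟩),
                fun h => absurd h hwit⟩
              simp [setSt, Function.update_of_ne (Ne.symm huv)]
            · subst hb1
              exact ⟨hf, hI, le_rfl, Or.inr (Or.inr ⟨true, hocc⟩), fun h => absurd h hwit⟩
      · -- food bit true: spread
        simp only [stateChange, hocc, adjFood_none hf v, Bool.false_eq_true,
          Bool.true_eq_false, false_and, and_false, true_and, true_or, false_or, or_false,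
          not_false_iff, and_true, if_false, if_true, ite_false, ite_true,
          PMF.support_pure, Set.mem_singleton_iff] at hb
        subst hb
        have htok : isTokenSite c v := ⟨_, hocc, by simp⟩
        exact ⟨hf, spread_inv hI, le_of_add_le_left (spread_phi htok),
          Or.inr (Or.inl (spread_occ_self c v)), fun _ => spread_phi htok⟩
lemma movement_support {lam : ℝ} {c : Conf L}
    (hf : c.food = none) (hI : StateInvariant c) (v : V L) (hsh : GoodShape c v)
    {b : Conf L} (hb : b ∈ (movement lam c v).support) :
    b.food = none ∧ StateInvariant b ∧ Phi b = Phi c := by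
  rcases hsh with hocc | hocc | ⟨g, hocc⟩
  · -- empty site: nothing happens
    rw [movement, hocc, PMF.support_pure, Set.mem_singleton_iff] at hb
    subst hb; exact ⟨hf, hI, rfl⟩
  · -- dispersed particle: exclusion random walk
    rw [movement, hocc] at hb
    obtain ⟨d, -, hb1⟩ := mem_support_bind hb
    rw [PMF.support_pure, Set.mem_singleton_iff] at hb1
    subst hb1
    by_cases hcond : c.occ (v + d) = none ∧ c.food ≠ some (v + d)
    · rw [if_pos hcond]
      exact dmove_props hf hI hocc hcond.1
    · rw [if_neg hcond]; exact ⟨hf, hI, rfl⟩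
  · -- compression particle: Metropolis move
    rw [movement, hocc] at hb
    obtain ⟨d, -, hb1⟩ := mem_support_bind hb
    have hfoodbit : ∀ x, (if adjFood c x then true else false) = false := by
      intro x; rw [if_neg (adjFood_none hf x)]
    by_cases hvm : validMove c v (v + d)
    · rw [if_pos hvm] at hb1
      obtain ⟨bb, -, hb2⟩ := mem_support_bind hb1
      rw [PMF.support_pure, Set.mem_singleton_iff] at hb2
      subst hb2
      cases bb
      · rw [if_neg (by decide : ¬ (false = true)), hfoodbit, setSt_self hocc]
        exact ⟨hf, hI, rfl⟩
      · rw [if_pos rfl, hfoodbit]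
        exact ⟨hf, mv_inv hf hI hocc hvm,
          mv_phi hocc hvm.2.1 (vm_ne hocc hvm)⟩
    · rw [if_neg hvm, PMF.support_pure, Set.mem_singleton_iff] at hb1
      subst hb1
      rw [hfoodbit, setSt_self hocc]
      exact ⟨hf, hI, rfl⟩
/-! ### Probability layer -/

lemma pmf_exp_le {α : Type*} (K : PMF α) (g : α → ℝ≥0∞) (M : ℝ≥0∞)
    (h : ∀ b, K b ≠ 0 → g b ≤ M) : ∑' b, K b * g b ≤ M := by
  calc ∑' b, K b * g b ≤ ∑' b, K b * M := by
        refine ENNReal.tsum_le_tsum fun b => ?_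
        by_cases hb : K b = 0
        · simp [hb]
        · exact mul_le_mul_right (h b hb) _
  _ = M := by rw [ENNReal.tsum_mul_right, K.tsum_coe, one_mul]

lemma tsum_bind_mul {α β : Type*} (p : PMF α) (f : α → PMF β) (g : β → ℝ≥0∞) :
    ∑' b, (p.bind f) b * g b = ∑' a, p a * ∑' b, (f a) b * g b := by
  simp only [PMF.bind_apply]
  calc ∑' b, (∑' a, p a * (f a) b) * g b
      = ∑' b, ∑' a, p a * (f a) b * g b := by
        refine tsum_congr fun b => ?_
        rw [ENNReal.tsum_mul_right]
    _ = ∑' a, ∑' b, p a * (f a) b * g b := ENNReal.tsum_comm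
    _ = ∑' a, p a * ∑' b, (f a) b * g b := by
        refine tsum_congr fun a => ?_
        rw [← ENNReal.tsum_mul_left]
        exact tsum_congr fun b => by ring

lemma surviveP_eq_zero {α : Type*} {step : α → PMF α} {goal : α → Prop} {a : α}
    (h : goal a) : ∀ t, surviveP step goal t a = 0 := by
  intro t; cases t <;> simp [surviveP, h]

/-- The Lyapunov-function bound on expected hitting times. -/
lemma ehit_le_lyap {α : Type*} (step : α → PMF α) (goal Good : α → Prop) (V : α → ℝ≥0∞)
    (h1 : ∀ a, Good a → ¬ goal a → 1 + ∑' b, step a b * V b ≤ V a)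
    (h2 : ∀ a b, Good a → ¬ goal a → step a b ≠ 0 → Good b)
    (a : α) (ha : Good a) : ehit step goal a ≤ V a := by
  have key : ∀ t a, Good a → ∑ s ∈ Finset.range t, surviveP step goal s a ≤ V a := by
    intro t
    induction t with
    | zero => intro a _; simp
    | succ t ih =>
      intro a ha
      by_cases hg : goal a
      · simp [surviveP_eq_zero hg]
      · rw [Finset.sum_range_succ']
        have h0 : surviveP step goal 0 a = 1 := by simp [surviveP, hg]
        have hs : ∀ s, surviveP step goal (s + 1) a =
            ∑' b, step a b * surviveP step goal s b := fun s => by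
          simp [surviveP, hg]
        calc (∑ s ∈ Finset.range t, surviveP step goal (s + 1) a) + surviveP step goal 0 a
            = (∑ s ∈ Finset.range t, ∑' b, step a b * surviveP step goal s b) + 1 := by
              rw [h0]; congr 1; exact Finset.sum_congr rfl fun s _ => hs s
          _ = (∑' b, ∑ s ∈ Finset.range t, step a b * surviveP step goal s b) + 1 := by
              rw [Summable.tsum_finsetSum fun i _ => ENNReal.summable]
          _ = (∑' b, step a b * ∑ s ∈ Finset.range t, surviveP step goal s b) + 1 := by
              congr 1; exact tsum_congr fun b => (Finset.mul_sum _ _ _).symm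
          _ ≤ (∑' b, step a b * V b) + 1 := by
              refine add_le_add_left (ENNReal.tsum_le_tsum fun b => ?_) 1
              by_cases hb : step a b = 0
              · simp [hb]
              · exact mul_le_mul_right (ih b (h2 a b ha hg hb)) _
          _ = 1 + ∑' b, step a b * V b := add_comm _ 1
          _ ≤ V a := h1 a ha hg
  rw [ehit, ENNReal.tsum_eq_iSup_nat]
  exact iSup_le fun t => key t a ha
/-! ### One-step properties of the full kernel -/

lemma act_support {p : ℝ≥0∞} {hp : p ≤ 1} {lam : ℝ} {c : Conf L} {v : V L} {b : Conf L}
    (hf : c.food = none) (hI : StateInvariant c)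
    (hb : b ∈ ((stateChange p hp c v).bind fun c' => movement lam c' v).support) :
    b.food = none ∧ StateInvariant b ∧ Phi b ≤ Phi c ∧
      (isWitness c v → Phi b + 1 ≤ Phi c) := by
  obtain ⟨c', hc', hb2⟩ := mem_support_bind hb
  obtain ⟨hf', hI', hphi', hsh', hwit'⟩ := stateChange_support hf hI v hc'
  obtain ⟨hbf, hbI, hbphi⟩ := movement_support hf' hI' v hsh' hb2
  exact ⟨hbf, hbI, hbphi ▸ hphi', fun hw => hbphi ▸ hwit' hw⟩

lemma compStep_good {p : ℝ≥0∞} {hp : p ≤ 1} {lam : ℝ} {c b : Conf L}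
    (hf : c.food = none) (hI : StateInvariant c)
    (hb : compStep p hp lam c b ≠ 0) : b.food = none ∧ StateInvariant b := by
  rw [compStep] at hb
  by_cases h : (occupiedSet c).Nonempty
  · rw [dif_pos h] at hb
    obtain ⟨v, -, hb2⟩ := mem_support_bind (PMF.mem_support_iff _ b |>.2 hb)
    obtain ⟨h1, h2, -, -⟩ := act_support hf hI hb2
    exact ⟨h1, h2⟩
  · rw [dif_neg h] at hb
    have : b = c := by simpa [PMF.mem_support_iff, PMF.support_pure] using hb
    subst this; exact ⟨hf, hI⟩

/-- The drift estimate: one step of the algorithm decreases the expected potential. -/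
lemma compStep_drift {p : ℝ≥0∞} {hp : p ≤ 1} {lam : ℝ} {c : Conf L}
    (hf : c.food = none) (hI : StateInvariant c)
    (hnd : ¬ ∀ v s, c.occ v = some s → s = CState.D) :
    1 + ∑' b, (compStep p hp lam c) b * ((L * L : ℝ≥0∞) * Phi b) ≤
      (L * L : ℝ≥0∞) * Phi c := by
  push_neg at hnd
  obtain ⟨v₀, s₀, hocc₀, hsD⟩ := hnd
  have htok₀ : isTokenSite c v₀ := ⟨s₀, hocc₀, hsD⟩
  obtain ⟨w, hr, hwit⟩ := hI v₀ htok₀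
  have hwit' : isWitness c w := hwit
  have hwocc : (c.occ w).isSome := by
    rcases hwit with h | ⟨g, h⟩ <;> simp [h]
  have hwmem : w ∈ occupiedSet c := by
    rw [occupiedSet, Finset.mem_filter]; exact ⟨Finset.mem_univ w, hwocc⟩
  have hne : (occupiedSet c).Nonempty := ⟨w, hwmem⟩
  set n := (occupiedSet c).card with hn
  have hn0 : (n : ℝ≥0∞) ≠ 0 := by
    simp only [ne_eq, Nat.cast_eq_zero, hn]
    exact Finset.card_ne_zero_of_mem hwmem
  have hntop : (n : ℝ≥0∞) ≠ ⊤ := ENNReal.natCast_ne_top n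
  set M := (L * L : ℝ≥0∞) * Phi c with hM
  set K := fun v => (stateChange p hp c v).bind fun c' => movement lam c' v with hK
  set E := fun v => ∑' b, (K v) b * ((L * L : ℝ≥0∞) * Phi b) with hE
  have hLL : (n : ℝ≥0∞) ≤ (L * L : ℝ≥0∞) := by
    have h1 : n ≤ Fintype.card (V L) := Finset.card_le_univ _
    have h2 : Fintype.card (V L) = L * L := by
      rw [Fintype.card_prod, ZMod.card]
    have := h1.trans (le_of_eq h2)
    exact_mod_cast this
  -- rewrite the expectation through the bind
  have hstep : ∑' b, (compStep p hp lam c) b * ((L * L : ℝ≥0∞) * Phi b) =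
      ∑ v ∈ occupiedSet c, (n : ℝ≥0∞)⁻¹ * E v := by
    rw [compStep, dif_pos hne, tsum_bind_mul, tsum_fintype]
    rw [show (∑ v ∈ occupiedSet c, (n : ℝ≥0∞)⁻¹ * E v) =
        ∑ v ∈ Finset.univ, (if v ∈ occupiedSet c then (n : ℝ≥0∞)⁻¹ * E v else 0) from by
      rw [Finset.sum_ite_mem, Finset.univ_inter]]
    refine Finset.sum_congr rfl fun v _ => ?_
    rw [PMF.uniformOfFinset_apply]
    by_cases hv : v ∈ occupiedSet c <;> simp [hv, hE, hK, hn]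
  -- individual bounds
  have hEle : ∀ v, E v ≤ M := by
    intro v
    refine pmf_exp_le _ _ _ fun b hb => ?_
    obtain ⟨-, -, hphi, -⟩ := act_support (v := v) hf hI (PMF.mem_support_iff _ b |>.2 hb)
    exact mul_le_mul_right (by exact_mod_cast hphi) _
  have hEwit : E w + (L * L : ℝ≥0∞) ≤ M := by
    have : E w + (L * L : ℝ≥0∞) =
        ∑' b, (K w) b * ((L * L : ℝ≥0∞) * Phi b + (L * L : ℝ≥0∞)) := by
      rw [hE]
      simp only [mul_add]
      rw [ENNReal.tsum_add, ENNReal.tsum_mul_right, (K w).tsum_coe, one_mul]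
    rw [this]
    refine pmf_exp_le _ _ _ fun b hb => ?_
    obtain ⟨-, -, -, hdec⟩ := act_support (v := w) hf hI (PMF.mem_support_iff _ b |>.2 hb)
    have hd := hdec hwit'
    calc (L * L : ℝ≥0∞) * Phi b + (L * L : ℝ≥0∞)
        = (L * L : ℝ≥0∞) * (Phi b + 1) := by ring
      _ ≤ (L * L : ℝ≥0∞) * Phi c := by
          refine mul_le_mul_right ?_ _
          exact_mod_cast hd
  -- assemble
  rw [hstep, ← Finset.sum_erase_add _ _ hwmem]
  have hB : ∑ v ∈ (occupiedSet c).erase w, (n : ℝ≥0∞)⁻¹ * E v ≤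
      ((n - 1 : ℕ) : ℝ≥0∞) * ((n : ℝ≥0∞)⁻¹ * M) := by
    have hcard : ((occupiedSet c).erase w).card = n - 1 := Finset.card_erase_of_mem hwmem
    calc ∑ v ∈ (occupiedSet c).erase w, (n : ℝ≥0∞)⁻¹ * E v
        ≤ ∑ _v ∈ (occupiedSet c).erase w, (n : ℝ≥0∞)⁻¹ * M :=
          Finset.sum_le_sum fun v _ => mul_le_mul_right (hEle v) _
      _ = ((n - 1 : ℕ) : ℝ≥0∞) * ((n : ℝ≥0∞)⁻¹ * M) := by
          rw [Finset.sum_const, hcard, nsmul_eq_mul]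
  have hA : 1 + (n : ℝ≥0∞)⁻¹ * E w ≤ (n : ℝ≥0∞)⁻¹ * M := by
    have h1 : (1 : ℝ≥0∞) = (n : ℝ≥0∞)⁻¹ * n := (ENNReal.inv_mul_cancel hn0 hntop).symm
    rw [h1, ← mul_add]
    refine mul_le_mul_right ?_ _
    calc (n : ℝ≥0∞) + E w ≤ (L * L : ℝ≥0∞) + E w := add_le_add_left hLL _
      _ = E w + (L * L : ℝ≥0∞) := add_comm _ _
      _ ≤ M := hEwit
  calc 1 + (∑ v ∈ (occupiedSet c).erase w, (n : ℝ≥0∞)⁻¹ * E v + (n : ℝ≥0∞)⁻¹ * E w)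
      = (1 + (n : ℝ≥0∞)⁻¹ * E w) + ∑ v ∈ (occupiedSet c).erase w, (n : ℝ≥0∞)⁻¹ * E v := by
        ring
    _ ≤ (n : ℝ≥0∞)⁻¹ * M + ((n - 1 : ℕ) : ℝ≥0∞) * ((n : ℝ≥0∞)⁻¹ * M) :=
        add_le_add hA hB
    _ = (((n - 1 : ℕ) : ℝ≥0∞) + 1) * ((n : ℝ≥0∞)⁻¹ * M) := by ring
    _ = (n : ℝ≥0∞) * ((n : ℝ≥0∞)⁻¹ * M) := by
        congr 1
        have hn1 : 1 ≤ n := Nat.one_le_iff_ne_zero.2 (Finset.card_ne_zero_of_mem hwmem)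
        have : (n - 1 : ℕ) + 1 = n := Nat.sub_add_cancel hn1
        exact_mod_cast congrArg (fun m : ℕ => (m : ℝ≥0∞)) this
    _ = M := by rw [← mul_assoc, ENNReal.mul_inv_cancel hn0 hntop, one_mul]

lemma Phi_le_card (c : Conf L) : Phi c ≤ 2 * (L * L) := by
  have h1 : Phi c ≤ Finset.univ.card • 2 :=
    Finset.sum_le_card_nsmul Finset.univ _ 2 fun x _ => wt_le_two _
  have h2 : (Finset.univ : Finset (V L)).card = L * L := by
    rw [Finset.card_univ, Fintype.card_prod, ZMod.card]
  rw [h2, smul_eq_mul] at h1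
  omega
end

/-- All particles are in the dispersion state. -/
def AllDispersed {L : ℕ} (c : Conf L) : Prop := ∀ v s, c.occ v = some s → s = CState.D

/-! **Statement 5.**
Starting from any configuration satisfying the state invariant, if there is no food particle
in the system thereafter, then under the Adaptive α-Compression Algorithm all particles
switch to the dispersion state within an expected number of steps polynomial in the number of
particles and lattice size. -/
theorem adaptive_compression_disperses_without_food :
    ∀ (p : ℝ≥0∞) (hp : p ≤ 1), 0 < p → p < 1 / 6 → ∀ lam : ℝ, 1 < lam →
      ∃ C k : ℕ, ∀ (L : ℕ) [NeZero L] (c0 : Conf L),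
        c0.food = none → StateInvariant c0 →
        ehit (compStep p hp lam) (fun c : Conf L => AllDispersed c) c0 ≤
          (C : ℝ≥0∞) * ((pcount c0 + L * L + 2 : ℕ) : ℝ≥0∞) ^ k := by
  intro p hp _ _ lam _
  refine ⟨2, 2, ?_⟩
  intro L _ c0 hf hI
  have hmain : ehit (compStep p hp lam) (fun c : Conf L => AllDispersed c) c0 ≤
      (L * L : ℝ≥0∞) * Phi c0 := by
    refine ehit_le_lyap _ _ (fun c => c.food = none ∧ StateInvariant c)
      (fun c => (L * L : ℝ≥0∞) * Phi c) ?_ ?_ c0 ⟨hf, hI⟩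
    · intro a ha hg
      exact compStep_drift ha.1 ha.2 hg
    · intro a b ha hg hb
      exact compStep_good ha.1 ha.2 hb
  refine hmain.trans ?_
  have h1 : L * L * Phi c0 ≤ 2 * (pcount c0 + L * L + 2) ^ 2 := by
    calc L * L * Phi c0 ≤ L * L * (2 * (L * L)) :=
          Nat.mul_le_mul_left _ (Phi_le_card c0)
      _ = 2 * ((L * L) * (L * L)) := by ring
      _ ≤ 2 * ((pcount c0 + L * L + 2) * (pcount c0 + L * L + 2)) := by
          have h : L * L ≤ pcount c0 + L * L + 2 := by omega
          exact Nat.mul_le_mul_left _ (Nat.mul_le_mul h h)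
      _ = 2 * (pcount c0 + L * L + 2) ^ 2 := by ring
  calc (L * L : ℝ≥0∞) * Phi c0 = ((L * L * Phi c0 : ℕ) : ℝ≥0∞) := by push_cast; ring
    _ ≤ ((2 * (pcount c0 + L * L + 2) ^ 2 : ℕ) : ℝ≥0∞) := by exact_mod_cast h1
    _ = (2 : ℕ) * ((pcount c0 + L * L + 2 : ℕ) : ℝ≥0∞) ^ 2 := by push_cast; ring
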